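/- For every integrable random variable X on an atomless probability space and every real threshold t, the set of maximizers over α ∈ [0,1] of the function g(α) = (1 − α)·(ES_α(X) − t) is exactly the closed interval [ℙ(X < t), ℙ(X ≤ t)]; that is, g(α) = E[(X − t)_+] if and only if ℙ(X < t) ≤ α ≤ ℙ(X ≤ t). -/

import Mathlib

open MeasureTheory Set

/-- An atomless measure: every set of nonzero measure can be split nontrivially. -/
def Atomless {Ω : Type*} [MeasurableSpace Ω] (μ : Measure Ω) : Prop :=
  ∀ A : Set Ω, MeasurableSet A → μ A ≠ 0 →
    ∃ B ⊆ A, MeasurableSet B ∧ μ B ≠ 0 ∧ μ B ≠ μ A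

/-- Left quantile (lower Value-at-Risk) of `X` at level `β`. -/
noncomputable def VaR {Ω : Type*} [MeasurableSpace Ω] (μ : Measure Ω) (X : Ω → ℝ) (β : ℝ) : ℝ :=
  sInf {t : ℝ | ENNReal.ofReal β ≤ μ {ω | X ω ≤ t}}

/-- Expected Shortfall of `X` at level `α ∈ [0,1)`; the value at `α = 1` is junk, but it is
only ever used multiplied by `1 - α = 0`, implementing the convention `0 · x = 0`. -/
noncomputable def ES {Ω : Type*} [MeasurableSpace Ω] (μ : Measure Ω) (X : Ω → ℝ) (α : ℝ) : ℝ :=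
  (1 - α)⁻¹ * ∫ β in Set.Ioo α 1, VaR μ X β

section Aux

open Filter Topology

variable {Ω : Type*} [MeasurableSpace Ω] (μ : Measure Ω) [IsProbabilityMeasure μ]
  {X : Ω → ℝ} (hX : Measurable X)

include hX

private lemma VaR_bddBelow {β : ℝ} (hβ : 0 < β) :
    BddBelow {s : ℝ | ENNReal.ofReal β ≤ μ {ω | X ω ≤ s}} := by
  have hT : Tendsto (fun n : ℕ => μ {ω | X ω ≤ -(n : ℝ)}) atTop
      (𝓝 (μ (⋂ n : ℕ, {ω | X ω ≤ -(n : ℝ)}))) := by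
    apply tendsto_measure_iInter_atTop
    · exact fun n => (measurableSet_le hX measurable_const).nullMeasurableSet
    · intro m n hmn ω hω
      have : -(n : ℝ) ≤ -(m : ℝ) := by exact_mod_cast neg_le_neg (by exact_mod_cast hmn)
      exact le_trans hω this
    · exact ⟨0, measure_ne_top μ _⟩
  have hempty : (⋂ n : ℕ, {ω | X ω ≤ -(n : ℝ)}) = ∅ := by
    ext ω
    simp only [mem_iInter, mem_setOf_eq, mem_empty_iff_false, iff_false, not_forall, not_le]
    obtain ⟨n, hn⟩ := exists_nat_gt (-X ω)
    exact ⟨n, by linarith⟩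
  rw [hempty, measure_empty] at hT
  obtain ⟨n, hn⟩ := (hT.eventually_lt_const (ENNReal.ofReal_pos.2 hβ)).exists
  refine ⟨-(n : ℝ), fun s hs => ?_⟩
  by_contra hlt
  push_neg at hlt
  exact absurd (le_trans hs (measure_mono fun ω hω => le_trans hω hlt.le)) hn.not_ge

private lemma VaR_nonempty {β : ℝ} (hβ : β < 1) :
    {s : ℝ | ENNReal.ofReal β ≤ μ {ω | X ω ≤ s}}.Nonempty := by
  have hT : Tendsto (fun n : ℕ => μ {ω | X ω ≤ (n : ℝ)}) atTop
      (𝓝 (μ (⋃ n : ℕ, {ω | X ω ≤ (n : ℝ)}))) := by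
    apply tendsto_measure_iUnion_atTop
    intro m n hmn ω hω
    exact le_trans (show X ω ≤ (m : ℝ) from hω) (by exact_mod_cast hmn)
  have huniv : (⋃ n : ℕ, {ω | X ω ≤ (n : ℝ)}) = univ := by
    ext ω
    simp only [mem_iUnion, mem_setOf_eq, mem_univ, iff_true]
    obtain ⟨n, hn⟩ := exists_nat_gt (X ω)
    exact ⟨n, hn.le⟩
  rw [huniv, measure_univ] at hT
  obtain ⟨n, hn⟩ := (hT.eventually_const_lt (ENNReal.ofReal_lt_one.2 hβ)).exists
  exact ⟨n, hn.le⟩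

private lemma VaR_le {β s : ℝ} (hβ : 0 < β) (h : ENNReal.ofReal β ≤ μ {ω | X ω ≤ s}) :
    VaR μ X β ≤ s :=
  csInf_le (VaR_bddBelow μ hX hβ) h

private lemma ofReal_le_of_VaR_le {β s : ℝ} (hβ0 : 0 < β) (hβ1 : β < 1)
    (h : VaR μ X β ≤ s) : ENNReal.ofReal β ≤ μ {ω | X ω ≤ s} := by
  have hbdd := VaR_bddBelow μ hX hβ0
  have hne := VaR_nonempty μ hX hβ1
  have key : ∀ n : ℕ, ENNReal.ofReal β ≤ μ {ω | X ω ≤ s + 1 / ((n : ℝ) + 1)} := by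
    intro n
    have hlt : VaR μ X β < s + 1 / ((n : ℝ) + 1) :=
      lt_of_le_of_lt h (lt_add_of_pos_right s (by positivity))
    obtain ⟨u, hu, hus⟩ := (csInf_lt_iff hbdd hne).1 hlt
    exact le_trans hu (measure_mono fun ω hω => le_trans hω hus.le)
  have hset : (⋂ n : ℕ, {ω | X ω ≤ s + 1 / ((n : ℝ) + 1)}) = {ω | X ω ≤ s} := by
    ext ω
    simp only [mem_iInter, mem_setOf_eq]
    constructor
    · intro hω
      by_contra hgt
      push_neg at hgt
      obtain ⟨n, hn⟩ := exists_nat_one_div_lt (sub_pos.2 hgt)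
      exact absurd (hω n) (by push_neg; linarith)
    · intro hω n
      have : (0 : ℝ) < 1 / ((n : ℝ) + 1) := by positivity
      linarith
  have hT : Tendsto (fun n : ℕ => μ {ω | X ω ≤ s + 1 / ((n : ℝ) + 1)}) atTop
      (𝓝 (μ {ω | X ω ≤ s})) := by
    rw [← hset]
    apply tendsto_measure_iInter_atTop
    · exact fun n => (measurableSet_le hX measurable_const).nullMeasurableSet
    · intro m n hmn ω hω
      refine le_trans hω (add_le_add_right ?_ s)
      apply one_div_le_one_div_of_le (by positivity)
      exact add_le_add_left (by exact_mod_cast hmn) 1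
    · exact ⟨0, measure_ne_top μ _⟩
  exact ge_of_tendsto hT (Eventually.of_forall key)

private lemma VaR_lt {β u : ℝ} (hβ : 0 < β) (h : ENNReal.ofReal β < μ {ω | X ω < u}) :
    VaR μ X β < u := by
  have hset : (⋃ n : ℕ, {ω | X ω ≤ u - 1 / ((n : ℝ) + 1)}) = {ω | X ω < u} := by
    ext ω
    simp only [mem_iUnion, mem_setOf_eq]
    constructor
    · rintro ⟨n, hn⟩
      have : (0 : ℝ) < 1 / ((n : ℝ) + 1) := by positivity
      linarith
    · intro hω
      obtain ⟨n, hn⟩ := exists_nat_one_div_lt (sub_pos.2 hω)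
      exact ⟨n, by linarith⟩
  have hT : Tendsto (fun n : ℕ => μ {ω | X ω ≤ u - 1 / ((n : ℝ) + 1)}) atTop
      (𝓝 (μ {ω | X ω < u})) := by
    rw [← hset]
    apply tendsto_measure_iUnion_atTop
    intro m n hmn ω hω
    refine le_trans hω (sub_le_sub_left ?_ u)
    apply one_div_le_one_div_of_le (by positivity)
    exact add_le_add_left (by exact_mod_cast hmn) 1
  obtain ⟨n, hn⟩ := (hT.eventually_const_lt h).exists
  refine lt_of_le_of_lt (VaR_le μ hX hβ hn.le) ?_
  have : (0 : ℝ) < 1 / ((n : ℝ) + 1) := by positivity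
  linarith

private lemma VaR_monoOn : MonotoneOn (VaR μ X) (Ioo (0 : ℝ) 1) := by
  intro β hβ β' hβ' hle
  exact VaR_le μ hX hβ.1 ((ENNReal.ofReal_le_ofReal hle).trans
    (ofReal_le_of_VaR_le μ hX hβ'.1 hβ'.2 le_rfl))

private lemma VaR_aemeasurable : AEMeasurable (VaR μ X) (volume.restrict (Ioo (0 : ℝ) 1)) :=
  aemeasurable_restrict_of_monotoneOn measurableSet_Ioo (VaR_monoOn μ hX)

private lemma map_VaR : (volume.restrict (Ioo (0 : ℝ) 1)).map (VaR μ X) = μ.map X := by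
  have hVm := VaR_aemeasurable μ hX
  have : IsProbabilityMeasure (μ.map X) := Measure.isProbabilityMeasure_map hX.aemeasurable
  refine (Measure.ext_of_Iic (μ.map X) _ fun s => ?_).symm
  rw [Measure.map_apply hX measurableSet_Iic,
    Measure.map_apply_of_aemeasurable hVm measurableSet_Iic,
    Measure.restrict_apply' measurableSet_Ioo]
  set c := (μ {ω | X ω ≤ s}).toReal with hcdef
  have hμc : μ {ω | X ω ≤ s} = ENNReal.ofReal c := (ENNReal.ofReal_toReal (measure_ne_top μ _)).symm
  have hc0 : 0 ≤ c := ENNReal.toReal_nonneg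
  have hc1 : c ≤ 1 := by
    have := ENNReal.toReal_mono (by simp) (prob_le_one (μ := μ) (s := {ω | X ω ≤ s}))
    simpa using this
  have hset : VaR μ X ⁻¹' Iic s ∩ Ioo 0 1 = Iic c ∩ Ioo 0 1 := by
    ext β
    simp only [mem_inter_iff, mem_preimage, mem_Iic, mem_Ioo]
    constructor
    · rintro ⟨h1, h2⟩
      refine ⟨?_, h2⟩
      have := ofReal_le_of_VaR_le μ hX h2.1 h2.2 h1
      rw [hμc] at this
      exact (ENNReal.ofReal_le_ofReal_iff hc0).1 this
    · rintro ⟨h1, h2⟩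
      exact ⟨VaR_le μ hX h2.1 (hμc ▸ ENNReal.ofReal_le_ofReal h1), h2⟩
  show μ {ω | X ω ≤ s} = _
  rw [hset, hμc]
  rcases lt_or_ge c 1 with hlt | hge
  · have h2 : Iic c ∩ Ioo (0 : ℝ) 1 = Ioc 0 c := by
      ext β
      simp only [mem_inter_iff, mem_Iic, mem_Ioo, mem_Ioc]
      constructor
      · rintro ⟨h1, h2, h3⟩; exact ⟨h2, h1⟩
      · rintro ⟨h1, h2⟩; exact ⟨h2, h1, lt_of_le_of_lt h2 hlt⟩
    rw [h2, Real.volume_Ioc, sub_zero]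
  · have hc1' : c = 1 := le_antisymm hc1 hge
    have h2 : Iic c ∩ Ioo (0 : ℝ) 1 = Ioo 0 1 := by
      rw [hc1']
      exact inter_eq_self_of_subset_right fun β hβ => le_of_lt hβ.2
    rw [h2, Real.volume_Ioo, hc1']
    norm_num

private lemma VaR_integrableOn (hXint : Integrable X μ) :
    IntegrableOn (VaR μ X) (Ioo (0 : ℝ) 1) volume := by
  have hVm := VaR_aemeasurable μ hX
  have h1 : Integrable (fun x : ℝ => x) (μ.map X) :=
    (integrable_map_measure aestronglyMeasurable_id hX.aemeasurable).2 hXint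
  rw [← map_VaR μ hX] at h1
  exact (integrable_map_measure aestronglyMeasurable_id hVm).1 h1

private lemma M_repr (hXint : Integrable X μ) (t : ℝ) :
    ∫ β in Ioo (0 : ℝ) 1, max (VaR μ X β - t) 0 = ∫ ω, max (X ω - t) 0 ∂μ := by
  have hVm := VaR_aemeasurable μ hX
  have hcont : Continuous fun x : ℝ => max (x - t) 0 :=
    (continuous_id.sub continuous_const).max continuous_const
  calc ∫ β in Ioo (0 : ℝ) 1, max (VaR μ X β - t) 0
      = ∫ x, max (x - t) 0 ∂((volume.restrict (Ioo (0 : ℝ) 1)).map (VaR μ X)) :=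
        (integral_map hVm hcont.aestronglyMeasurable).symm
    _ = ∫ x, max (x - t) 0 ∂(μ.map X) := by rw [map_VaR μ hX]
    _ = ∫ ω, max (X ω - t) 0 ∂μ := integral_map hX.aemeasurable hcont.aestronglyMeasurable

end Aux

/-- The set of maximizers over `α ∈ [0,1]` of `g(α) = (1 - α)(ES_α(X) - t)`, i.e. the set of
`α ∈ [0,1]` where `g` attains the value `E[(X - t)_+]`, is exactly `[ℙ(X < t), ℙ(X ≤ t)]`. -/
theorem reverse_ES_maximizers {Ω : Type*} [MeasurableSpace Ω] (μ : Measure Ω)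
    [IsProbabilityMeasure μ] (hμ : Atomless μ) (X : Ω → ℝ)
    (hXmeas : Measurable X) (hXint : Integrable X μ) (t : ℝ) :
    {α ∈ Set.Icc (0 : ℝ) 1 | (1 - α) * (ES μ X α - t) = ∫ ω, max (X ω - t) 0 ∂μ}
      = Set.Icc (μ {ω | X ω < t}).toReal (μ {ω | X ω ≤ t}).toReal := by
  classical
  set V := VaR μ X with hVdef
  set M := ∫ ω, max (X ω - t) 0 ∂μ with hMdef
  set a := (μ {ω | X ω < t}).toReal with hadef
  set b := (μ {ω | X ω ≤ t}).toReal with hbdef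
  have hμa : μ {ω | X ω < t} = ENNReal.ofReal a := (ENNReal.ofReal_toReal (measure_ne_top μ _)).symm
  have hμb : μ {ω | X ω ≤ t} = ENNReal.ofReal b := (ENNReal.ofReal_toReal (measure_ne_top μ _)).symm
  have ha0 : 0 ≤ a := ENNReal.toReal_nonneg
  have hb0 : 0 ≤ b := ENNReal.toReal_nonneg
  have ha1 : a ≤ 1 := by
    have := ENNReal.toReal_mono (by simp) (prob_le_one (μ := μ) (s := {ω | X ω < t}))
    simpa using this
  have hb1 : b ≤ 1 := by
    have := ENNReal.toReal_mono (by simp) (prob_le_one (μ := μ) (s := {ω | X ω ≤ t}))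
    simpa using this
  have hab : a ≤ b :=
    ENNReal.toReal_mono (measure_ne_top μ _) (measure_mono fun ω (h : X ω < t) => le_of_lt h)
  have hVint : IntegrableOn V (Ioo (0 : ℝ) 1) volume := VaR_integrableOn μ hXmeas hXint
  have hMrepr : ∫ β in Ioo (0 : ℝ) 1, max (V β - t) 0 = M := M_repr μ hXmeas hXint t
  have hconst : ∀ (c : ℝ) (s : Set ℝ), volume s < ⊤ → IntegrableOn (fun _ : ℝ => c) s volume :=
    fun c s hs => integrableOn_const hs.ne (by simp)
  have hvolIoo : ∀ u v : ℝ, volume (Ioo u v) < ⊤ := fun u v => by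
    rw [Real.volume_Ioo]; exact ENNReal.ofReal_lt_top
  have hvolIoc : ∀ u v : ℝ, volume (Ioc u v) < ⊤ := fun u v => by
    rw [Real.volume_Ioc]; exact ENNReal.ofReal_lt_top
  have hposint : IntegrableOn (fun β => max (V β - t) 0) (Ioo (0 : ℝ) 1) volume :=
    (hVint.sub (hconst t _ (hvolIoo 0 1))).pos_part
  have hnegint : IntegrableOn (fun β => max (t - V β) 0) (Ioo (0 : ℝ) 1) volume :=
    ((hconst t _ (hvolIoo 0 1)).sub hVint).pos_part
  -- the key decomposition
  have key : ∀ α, 0 ≤ α → α ≤ 1 → (1 - α) * (ES μ X α - t) =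
      M - ((∫ β in Ioc (0 : ℝ) α, max (V β - t) 0) +
        (∫ β in Ioo α (1 : ℝ), max (t - V β) 0)) := by
    intro α hα0 hα1
    rcases eq_or_lt_of_le hα1 with rfl | hα1'
    · have h1 : ∫ β in Ioc (0 : ℝ) 1, max (V β - t) 0 = M := by
        rw [← hMrepr]
        exact setIntegral_congr_set Ioo_ae_eq_Ioc.symm
      rw [h1]
      norm_num [Set.Ioo_self]
    · have hIoosub : Ioo α (1 : ℝ) ⊆ Ioo 0 1 := fun x hx => ⟨lt_of_le_of_lt hα0 hx.1, hx.2⟩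
      have hIocsub : Ioc (0 : ℝ) α ⊆ Ioo 0 1 := fun x hx => ⟨hx.1, lt_of_le_of_lt hx.2 hα1'⟩
      have hunion : Ioc (0 : ℝ) α ∪ Ioo α 1 = Ioo 0 1 := Ioc_union_Ioo_eq_Ioo hα0 hα1'
      have hdisj : Disjoint (Ioc (0 : ℝ) α) (Ioo α 1) := by
        rw [Set.disjoint_left]
        rintro x ⟨_, h2⟩ ⟨h3, _⟩
        exact absurd h3 (not_lt.2 h2)
      have h1 : M = (∫ β in Ioc (0 : ℝ) α, max (V β - t) 0) +
          (∫ β in Ioo α (1 : ℝ), max (V β - t) 0) := by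
        rw [← hMrepr, ← hunion,
          setIntegral_union hdisj measurableSet_Ioo (hposint.mono_set hIocsub)
            (hposint.mono_set hIoosub)]
      have hf1 : IntegrableOn (fun β => V β - t) (Ioo α (1 : ℝ)) volume :=
        (hVint.mono_set hIoosub).sub (hconst t _ (hvolIoo α 1))
      have hf2 : IntegrableOn (fun β => max (t - V β) 0) (Ioo α (1 : ℝ)) volume :=
        hnegint.mono_set hIoosub
      have h2 : ∫ β in Ioo α (1 : ℝ), max (V β - t) 0 =
          (∫ β in Ioo α (1 : ℝ), (V β - t)) + (∫ β in Ioo α (1 : ℝ), max (t - V β) 0) := by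
        rw [← integral_add hf1 hf2]
        apply setIntegral_congr_fun measurableSet_Ioo
        intro β _
        show max (V β - t) 0 = V β - t + max (t - V β) 0
        rcases le_total (V β) t with h | h
        · rw [max_eq_right (sub_nonpos.2 h), max_eq_left (sub_nonneg.2 h)]; ring
        · rw [max_eq_left (sub_nonneg.2 h), max_eq_right (sub_nonpos.2 h)]; ring
      have hES : (1 - α) * (ES μ X α - t) = ∫ β in Ioo α (1 : ℝ), (V β - t) := by
        have h1α : (0 : ℝ) < 1 - α := by linarith
        have hsub : ∫ β in Ioo α (1 : ℝ), (V β - t) =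
            (∫ β in Ioo α (1 : ℝ), V β) - (1 - α) * t := by
          rw [integral_sub (hVint.mono_set hIoosub) (hconst t _ (hvolIoo α 1)),
            setIntegral_const, Real.volume_real_Ioo_of_le hα1, smul_eq_mul]
        rw [ES, hsub]
        field_simp
        rfl
      rw [hES, h1, h2]
      ring
  have hA0 : ∀ α : ℝ, 0 ≤ ∫ β in Ioc (0 : ℝ) α, max (V β - t) 0 := fun α =>
    setIntegral_nonneg measurableSet_Ioc fun x _ => le_max_right _ _
  have hB0 : ∀ α : ℝ, 0 ≤ ∫ β in Ioo α (1 : ℝ), max (t - V β) 0 := fun α =>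
    setIntegral_nonneg measurableSet_Ioo fun x _ => le_max_right _ _
  ext α
  simp only [mem_setOf_eq, mem_Icc, ← hadef, ← hbdef]
  constructor
  · rintro ⟨⟨hα0, hα1⟩, heq⟩
    have hkey := key α hα0 hα1
    rw [heq] at hkey
    have hAB : (∫ β in Ioc (0 : ℝ) α, max (V β - t) 0) +
        (∫ β in Ioo α (1 : ℝ), max (t - V β) 0) = 0 := by linarith
    have hA : ∫ β in Ioc (0 : ℝ) α, max (V β - t) 0 = 0 := le_antisymm (by linarith [hB0 α]) (hA0 α)
    have hB : ∫ β in Ioo α (1 : ℝ), max (t - V β) 0 = 0 := le_antisymm (by linarith [hA0 α]) (hB0 α)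
    constructor
    · -- a ≤ α
      by_contra hcon
      push_neg at hcon
      set c := (α + a) / 2 with hcdef
      have hc1 : α < c := by rw [hcdef]; linarith
      have hc2 : c < a := by rw [hcdef]; linarith
      have hc0 : 0 < c := lt_of_le_of_lt hα0 hc1
      have hclt1 : c < 1 := lt_of_lt_of_le hc2 ha1
      have hVc : V c < t := by
        apply VaR_lt μ hXmeas hc0
        rw [hμa]
        exact (ENNReal.ofReal_lt_ofReal_iff (by linarith)).2 hc2
      have hsub1 : Ioc α c ⊆ Ioo α (1 : ℝ) := fun x hx => ⟨hx.1, lt_of_le_of_lt hx.2 hclt1⟩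
      have hsub2 : Ioo α (1 : ℝ) ⊆ Ioo 0 1 := fun x hx => ⟨lt_of_le_of_lt hα0 hx.1, hx.2⟩
      have hm1 : ∫ β in Ioc α c, (fun _ => t - V c) β ≤
          ∫ β in Ioc α c, max (t - V β) 0 := by
        apply setIntegral_mono_on (hconst _ _ (hvolIoc α c))
          ((hnegint.mono_set (hsub1.trans hsub2))) measurableSet_Ioc
        intro β hβ
        have hβmem : β ∈ Ioo (0 : ℝ) 1 := hsub2 (hsub1 hβ)
        have hcmem : c ∈ Ioo (0 : ℝ) 1 := ⟨hc0, hclt1⟩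
        have := VaR_monoOn μ hXmeas hβmem hcmem hβ.2
        exact le_trans (by linarith) (le_max_left _ _)
      have hm2 : ∫ β in Ioc α c, max (t - V β) 0 ≤ ∫ β in Ioo α (1 : ℝ), max (t - V β) 0 :=
        setIntegral_mono_set (hnegint.mono_set hsub2)
          (Filter.Eventually.of_forall fun β => le_max_right _ _)
          (HasSubset.Subset.eventuallyLE hsub1)
      rw [setIntegral_const, Real.volume_real_Ioc_of_le (by linarith),
        smul_eq_mul] at hm1
      have hpos : 0 < (c - α) * (t - V c) := mul_pos (by linarith) (by linarith)
      linarith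
    · -- α ≤ b
      by_contra hcon
      push_neg at hcon
      set c := (b + α) / 2 with hcdef
      set c' := (c + α) / 2 with hc'def
      have hbc : b < c := by rw [hcdef]; linarith
      have hcc' : c < c' := by rw [hc'def, hcdef]; linarith
      have hc'α : c' < α := by rw [hc'def, hcdef]; linarith
      have hc0 : 0 < c := lt_of_le_of_lt hb0 hbc
      have hc'1 : c' < 1 := lt_of_lt_of_le hc'α hα1
      have hc1 : c < 1 := lt_trans hcc' hc'1
      have hVc : t < V c := by
        by_contra hle
        push_neg at hle
        have := ofReal_le_of_VaR_le μ hXmeas hc0 hc1 hle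
        rw [hμb] at this
        exact absurd ((ENNReal.ofReal_le_ofReal_iff hb0).1 this) (not_le.2 hbc)
      have hsub1 : Ioc c c' ⊆ Ioc (0 : ℝ) α := fun x hx => ⟨lt_trans hc0 hx.1, hx.2.trans hc'α.le⟩
      have hsub2' : Ioc c c' ⊆ Ioo (0 : ℝ) 1 := fun x hx =>
        ⟨lt_trans hc0 hx.1, lt_of_le_of_lt hx.2 hc'1⟩
      have hm1 : ∫ β in Ioc c c', (fun _ => V c - t) β ≤
          ∫ β in Ioc c c', max (V β - t) 0 := by
        apply setIntegral_mono_on (hconst _ _ (hvolIoc c c'))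
          (hposint.mono_set hsub2') measurableSet_Ioc
        intro β hβ
        have hβmem : β ∈ Ioo (0 : ℝ) 1 := hsub2' hβ
        have hcmem : c ∈ Ioo (0 : ℝ) 1 := ⟨hc0, hc1⟩
        have := VaR_monoOn μ hXmeas hcmem hβmem hβ.1.le
        exact le_trans (by linarith) (le_max_left _ _)
      have hIocint : IntegrableOn (fun β => max (V β - t) 0) (Ioc (0 : ℝ) α) volume := by
        rcases le_or_gt 1 α with hge | hlt
        · have hα1' : α = 1 := le_antisymm hα1 hge
          subst hα1'
          rw [IntegrableOn, Measure.restrict_congr_set Ioo_ae_eq_Ioc.symm]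
          exact hposint
        · exact hposint.mono_set fun x hx => ⟨hx.1, lt_of_le_of_lt hx.2 hlt⟩
      have hm2 : ∫ β in Ioc c c', max (V β - t) 0 ≤ ∫ β in Ioc (0 : ℝ) α, max (V β - t) 0 :=
        setIntegral_mono_set hIocint
          (Filter.Eventually.of_forall fun β => le_max_right _ _)
          (HasSubset.Subset.eventuallyLE hsub1)
      rw [setIntegral_const, Real.volume_real_Ioc_of_le (by linarith),
        smul_eq_mul] at hm1
      have hpos : 0 < (c' - c) * (V c - t) := mul_pos (by linarith) (by linarith)
      linarith
  · rintro ⟨haα, hαb⟩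
    have hα0 : 0 ≤ α := ha0.trans haα
    have hα1 : α ≤ 1 := hαb.trans hb1
    refine ⟨⟨hα0, hα1⟩, ?_⟩
    have hA : ∫ β in Ioc (0 : ℝ) α, max (V β - t) 0 = 0 := by
      rw [setIntegral_congr_fun measurableSet_Ioc (g := fun _ => (0 : ℝ)) ?_, integral_zero]
      intro β hβ
      have hβb : β ≤ b := hβ.2.trans hαb
      have hVβ : V β ≤ t := VaR_le μ hXmeas hβ.1 (hμb ▸ ENNReal.ofReal_le_ofReal hβb)
      simp [max_eq_right (sub_nonpos.2 hVβ)]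
    have hB : ∫ β in Ioo α (1 : ℝ), max (t - V β) 0 = 0 := by
      rw [setIntegral_congr_fun measurableSet_Ioo (g := fun _ => (0 : ℝ)) ?_, integral_zero]
      intro β hβ
      have hβ0 : 0 < β := lt_of_le_of_lt hα0 hβ.1
      have htV : t ≤ V β := by
        by_contra hlt
        push_neg at hlt
        obtain ⟨u, hu, hut⟩ := (csInf_lt_iff (VaR_bddBelow μ hXmeas hβ0)
          (VaR_nonempty μ hXmeas hβ.2)).1 hlt
        have h1 : ENNReal.ofReal β ≤ μ {ω | X ω < t} :=
          le_trans hu (measure_mono fun ω hω => lt_of_le_of_lt hω hut)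
        rw [hμa] at h1
        have : β ≤ a := (ENNReal.ofReal_le_ofReal_iff ha0).1 h1
        linarith [lt_of_le_of_lt haα hβ.1]
      simp [max_eq_right (sub_nonpos.2 htV)]
    rw [key α hα0 hα1, hA, hB]
    ring
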